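/- (Woodin's observation, abstract form) Let j : Ordinal → Ordinal be strictly monotone and ω-continuous, let δ be a limit ordinal with j δ = δ, and let S be a set of ordinals less than δ that intersects every ω-club in δ (an ω-stationary subset of δ). Then S intersects the image of j: there exists an ordinal α < δ with j α ∈ S. -/

import Mathlib

/-- A function on ordinals is `ω`-continuous if it commutes with suprema of strictly
increasing `ω`-sequences. -/
def OmegaContinuous (j : Ordinal → Ordinal) : Prop :=
  ∀ f : ℕ → Ordinal, StrictMono f → j (⨆ n, f n) = ⨆ n, j (f n)

/-- `C` is an `ω`-club in `δ`: a set of ordinals less than `δ` that is unbounded in `δ`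
and closed under suprema of strictly increasing `ω`-sequences with supremum below `δ`. -/
def IsOmegaClub (C : Set Ordinal) (δ : Ordinal) : Prop :=
  (∀ α ∈ C, α < δ) ∧
  (∀ β < δ, ∃ α ∈ C, β ≤ α) ∧
  (∀ f : ℕ → Ordinal, StrictMono f → (∀ n, f n ∈ C) → (⨆ n, f n) < δ →
    (⨆ n, f n) ∈ C)

/-- Woodin's observation, abstract form: an `ω`-stationary subset of `δ` meets the
image of any strictly monotone `ω`-continuous map fixing `δ`. -/
theorem stationary_meets_image (j : Ordinal → Ordinal)
    (hj : StrictMono j) (hjc : OmegaContinuous j)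
    (δ : Ordinal) (hδ : Order.IsSuccLimit δ) (hjδ : j δ = δ)
    (S : Set Ordinal) (hS : ∀ α ∈ S, α < δ)
    (hstat : ∀ C : Set Ordinal, IsOmegaClub C δ → (S ∩ C).Nonempty) :
    ∃ α, α < δ ∧ j α ∈ S := by
  set C : Set Ordinal := Set.range j ∩ Set.Iio δ with hC
  have hclub : IsOmegaClub C δ := by
    refine ⟨fun α hα => hα.2, ?_, ?_⟩
    · intro β hβ
      refine ⟨j β, ⟨⟨β, rfl⟩, ?_⟩, hj.le_apply⟩
      calc j β < j δ := hj hβ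
        _ = δ := hjδ
    · intro f hf hmem hsup
      choose g hg using fun n => (hmem n).1
      have hgmono : StrictMono g := by
        intro m n hmn
        have := hf hmn
        rw [← hg m, ← hg n] at this
        exact hj.lt_iff_lt.mp this
      refine ⟨⟨⨆ n, g n, ?_⟩, hsup⟩
      rw [hjc g hgmono]
      exact iSup_congr hg
  obtain ⟨β, hβS, ⟨α, rfl⟩, hβδ⟩ := hstat C hclub
  exact ⟨α, lt_of_le_of_lt hj.le_apply hβδ, hβS⟩
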